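/- Let 0 < k < 2 and ε be real, and let x, y, z : ℝ → ℝ be differentiable functions satisfying x′ = k·x − y, y′ = x − z, z′ = ε. Define D(t) = (x(t) − z(t) − k·ε)² + (y(t) − k·z(t) − k²·ε + ε)². Then there exist ϑ ≥ 0 and φ ∈ ℝ such that for all t ∈ ℝ, D(t) = ϑ²·e^{k·t}·(1 + (k/2)·cos(√(4 − k²)·t + φ)). In particular, (1 − k/2)·ϑ²·e^{k·t} ≤ D(t) ≤ (1 + k/2)·ϑ²·e^{k·t} for all t, and if D(0) > 0 then ϑ > 0 and ((1 − k/2)/(1 + k/2))·e^{k·t}·D(0) ≤ D(t) ≤ ((1 + k/2)/(1 − k/2))·e^{k·t}·D(0) for all t. -/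

import Mathlib

/-- Explicit solution of the planar rotation-dilation system. -/
lemma rot_sol (μ ω : ℝ) (p q : ℝ → ℝ)
    (hp : ∀ t, HasDerivAt p (μ * p t - ω * q t) t)
    (hq : ∀ t, HasDerivAt q (ω * p t + μ * q t) t) (t : ℝ) :
    p t = Real.exp (μ * t) * (p 0 * Real.cos (ω * t) - q 0 * Real.sin (ω * t)) ∧
    q t = Real.exp (μ * t) * (p 0 * Real.sin (ω * t) + q 0 * Real.cos (ω * t)) := by
  have hexp : ∀ s : ℝ, HasDerivAt (fun s : ℝ => Real.exp (-μ * s))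
      (Real.exp (-μ * s) * (-μ * 1)) s := fun s => ((hasDerivAt_id s).const_mul (-μ)).exp
  have hcos : ∀ s : ℝ, HasDerivAt (fun s : ℝ => Real.cos (ω * s))
      (-Real.sin (ω * s) * (ω * 1)) s := fun s => ((hasDerivAt_id s).const_mul ω).cos
  have hsin : ∀ s : ℝ, HasDerivAt (fun s : ℝ => Real.sin (ω * s))
      (Real.cos (ω * s) * (ω * 1)) s := fun s => ((hasDerivAt_id s).const_mul ω).sin
  have hA' : ∀ s : ℝ, HasDerivAt
      (fun s : ℝ => Real.exp (-μ * s) * (p s * Real.cos (ω * s) + q s * Real.sin (ω * s))) 0 s := by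
    intro s
    have h := (hexp s).mul (((hp s).mul (hcos s)).add ((hq s).mul (hsin s)))
    refine h.congr_deriv ?_
    simp only [Pi.mul_apply, Pi.add_apply, Pi.sub_apply]
    ring
  have hB' : ∀ s : ℝ, HasDerivAt
      (fun s : ℝ => Real.exp (-μ * s) * (q s * Real.cos (ω * s) - p s * Real.sin (ω * s))) 0 s := by
    intro s
    have h := (hexp s).mul (((hq s).mul (hcos s)).sub ((hp s).mul (hsin s)))
    refine h.congr_deriv ?_
    simp only [Pi.mul_apply, Pi.add_apply, Pi.sub_apply]
    ring
  have hAc := is_const_of_deriv_eq_zero (fun s => (hA' s).differentiableAt)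
      (fun s => (hA' s).deriv) t 0
  have hBc := is_const_of_deriv_eq_zero (fun s => (hB' s).differentiableAt)
      (fun s => (hB' s).deriv) t 0
  simp only [mul_zero, neg_zero, Real.exp_zero, Real.cos_zero, Real.sin_zero, one_mul,
    mul_one, mul_zero, add_zero, sub_zero, zero_mul] at hAc hBc
  have hE : Real.exp (μ * t) * Real.exp (-μ * t) = 1 := by
    rw [← Real.exp_add]; simp
  have hcs : Real.cos (ω * t) ^ 2 + Real.sin (ω * t) ^ 2 = 1 := Real.cos_sq_add_sin_sq _
  constructor
  · linear_combination (Real.exp (μ * t) * Real.cos (ω * t)) * hAc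
      - (Real.exp (μ * t) * Real.sin (ω * t)) * hBc - p t * hE
      - (Real.exp (μ * t) * Real.exp (-μ * t) * p t) * hcs
  · linear_combination (Real.exp (μ * t) * Real.sin (ω * t)) * hAc
      + (Real.exp (μ * t) * Real.cos (ω * t)) * hBc - q t * hE
      - (Real.exp (μ * t) * Real.exp (-μ * t) * q t) * hcs

lemma exists_phi (R S r : ℝ) (hr : 0 ≤ r) (h : R ^ 2 + S ^ 2 = r ^ 2) :
    ∃ φ : ℝ, R = r * Real.cos φ ∧ S = -(r * Real.sin φ) := by
  rcases hr.eq_or_lt with h0 | h0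
  · subst h0
    refine ⟨0, ?_, ?_⟩ <;> simp <;> nlinarith [sq_nonneg R, sq_nonneg S]
  · set z : ℂ := ⟨R, -S⟩ with hz
    have hzre : z.re = R := rfl
    have hzim : z.im = -S := rfl
    have hzne : z ≠ 0 := by
      intro hz0
      rw [Complex.ext_iff] at hz0
      simp only [Complex.zero_re, Complex.zero_im] at hz0
      nlinarith [hz0.1, hz0.2]
    have habs : ‖z‖ = r := by
      rw [Complex.norm_def, hz, Complex.normSq_mk]
      rw [show R * R + -S * -S = r ^ 2 by nlinarith]
      exact Real.sqrt_sq hr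
    refine ⟨Complex.arg z, ?_, ?_⟩
    · rw [Complex.cos_arg hzne, habs, hzre]
      field_simp
    · rw [Complex.sin_arg, habs, hzim]
      field_simp

set_option maxHeartbeats 1000000 in
/-- the squared distance from a solution of the right-region system to
the canonical repelling slow manifold grows like `ϑ²·e^{k·t}` modulated by a bounded
oscillatory factor. -/
theorem stmt5 (k ε : ℝ) (hk0 : 0 < k) (hk2 : k < 2)
    (x y z : ℝ → ℝ)
    (hx : ∀ t, HasDerivAt x (k * x t - y t) t)
    (hy : ∀ t, HasDerivAt y (x t - z t) t)
    (hz : ∀ t, HasDerivAt z ε t)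
    (D : ℝ → ℝ)
    (hD : ∀ t, D t = (x t - z t - k * ε) ^ 2 + (y t - k * z t - k ^ 2 * ε + ε) ^ 2) :
    ∃ ϑ φ : ℝ, 0 ≤ ϑ ∧
      (∀ t : ℝ, D t =
        ϑ ^ 2 * Real.exp (k * t) * (1 + (k / 2) * Real.cos (Real.sqrt (4 - k ^ 2) * t + φ))) ∧
      (∀ t : ℝ,
        (1 - k / 2) * ϑ ^ 2 * Real.exp (k * t) ≤ D t ∧
        D t ≤ (1 + k / 2) * ϑ ^ 2 * Real.exp (k * t)) ∧
      (0 < D 0 → 0 < ϑ ∧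
        ∀ t : ℝ,
          ((1 - k / 2) / (1 + k / 2)) * Real.exp (k * t) * D 0 ≤ D t ∧
          D t ≤ ((1 + k / 2) / (1 - k / 2)) * Real.exp (k * t) * D 0) := by
  have h4 : (0:ℝ) < 4 - k ^ 2 := by nlinarith
  set ω : ℝ := Real.sqrt (4 - k ^ 2) / 2 with hωdef
  clear_value ω
  have hω0 : 0 < ω := by
    rw [hωdef]
    have := Real.sqrt_pos.mpr h4
    linarith
  have hs2 : ω ^ 2 = (4 - k ^ 2) / 4 := by
    rw [hωdef, div_pow, Real.sq_sqrt h4.le]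
    norm_num
  have hμω : (k / 2) ^ 2 + ω ^ 2 = 1 := by
    rw [hs2]
    ring
  -- derivatives of the shifted variables
  have hv : ∀ t, HasDerivAt (fun t => y t - k * z t - k ^ 2 * ε + ε)
      (x t - z t - k * ε) t := by
    intro t
    exact (((hy t).sub ((hz t).const_mul k)).sub_const (k ^ 2 * ε)).add_const ε
  have hu : ∀ t, HasDerivAt (fun t => x t - z t - k * ε) (k * x t - y t - ε) t := by
    intro t
    exact ((hx t).sub (hz t)).sub_const (k * ε)
  have hp : ∀ t, HasDerivAt
      (fun t => x t - z t - k * ε - k / 2 * (y t - k * z t - k ^ 2 * ε + ε))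
      (k / 2 * (x t - z t - k * ε - k / 2 * (y t - k * z t - k ^ 2 * ε + ε))
        - ω * (ω * (y t - k * z t - k ^ 2 * ε + ε))) t := by
    intro t
    have h := (hu t).sub ((hv t).const_mul (k / 2))
    refine h.congr_deriv ?_
    linear_combination (y t - k * z t - k ^ 2 * ε + ε) * hμω
  have hq : ∀ t, HasDerivAt (fun t => ω * (y t - k * z t - k ^ 2 * ε + ε))
      (ω * (x t - z t - k * ε - k / 2 * (y t - k * z t - k ^ 2 * ε + ε))
        + k / 2 * (ω * (y t - k * z t - k ^ 2 * ε + ε))) t := by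
    intro t
    have h := (hv t).const_mul ω
    refine h.congr_deriv ?_
    ring
  -- explicit solution
  have h1 : ∀ t : ℝ, x t - z t - k * ε - k / 2 * (y t - k * z t - k ^ 2 * ε + ε)
      = Real.exp (k / 2 * t) *
        ((x 0 - z 0 - k * ε - k / 2 * (y 0 - k * z 0 - k ^ 2 * ε + ε)) * Real.cos (ω * t)
          - ω * (y 0 - k * z 0 - k ^ 2 * ε + ε) * Real.sin (ω * t)) :=
    fun t => (rot_sol (k / 2) ω
      (fun t => x t - z t - k * ε - k / 2 * (y t - k * z t - k ^ 2 * ε + ε))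
      (fun t => ω * (y t - k * z t - k ^ 2 * ε + ε)) hp hq t).1
  have h2 : ∀ t : ℝ, ω * (y t - k * z t - k ^ 2 * ε + ε)
      = Real.exp (k / 2 * t) *
        ((x 0 - z 0 - k * ε - k / 2 * (y 0 - k * z 0 - k ^ 2 * ε + ε)) * Real.sin (ω * t)
          + ω * (y 0 - k * z 0 - k ^ 2 * ε + ε) * Real.cos (ω * t)) :=
    fun t => (rot_sol (k / 2) ω
      (fun t => x t - z t - k * ε - k / 2 * (y t - k * z t - k ^ 2 * ε + ε))
      (fun t => ω * (y t - k * z t - k ^ 2 * ε + ε)) hp hq t).2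
  obtain ⟨A, hA⟩ : ∃ A : ℝ, A = x 0 - z 0 - k * ε - k / 2 * (y 0 - k * z 0 - k ^ 2 * ε + ε) :=
    ⟨_, rfl⟩
  obtain ⟨B, hB⟩ : ∃ B : ℝ, B = ω * (y 0 - k * z 0 - k ^ 2 * ε + ε) := ⟨_, rfl⟩
  rw [← hA, ← hB] at h1 h2
  -- oscillation phase
  have hRS : (k / 2 * (2 * ω * A * B - k / 2 * (A ^ 2 - B ^ 2))) ^ 2
      + (k / 2 * (ω * (A ^ 2 - B ^ 2) + 2 * (k / 2) * A * B)) ^ 2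
      = (k / 2 * (A ^ 2 + B ^ 2)) ^ 2 := by
    linear_combination ((k / 2) ^ 2 * (A ^ 2 + B ^ 2) ^ 2) * hμω
  obtain ⟨φ, hφ1, hφ2⟩ := exists_phi _ _ (k / 2 * (A ^ 2 + B ^ 2))
    (mul_nonneg (by linarith) (by positivity)) hRS
  obtain ⟨ϑ, hϑdef⟩ : ∃ ϑ : ℝ, ϑ = Real.sqrt (A ^ 2 + B ^ 2) / ω := ⟨_, rfl⟩
  have hϑ0 : 0 ≤ ϑ := by
    rw [hϑdef]
    exact div_nonneg (Real.sqrt_nonneg _) hω0.le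
  have hϑ2 : ω ^ 2 * ϑ ^ 2 = A ^ 2 + B ^ 2 := by
    rw [hϑdef, div_pow, Real.sq_sqrt (by positivity : (0:ℝ) ≤ A ^ 2 + B ^ 2)]
    field_simp
  -- the main formula
  have key : ∀ t : ℝ, D t = ϑ ^ 2 * Real.exp (k * t) *
      (1 + k / 2 * Real.cos (Real.sqrt (4 - k ^ 2) * t + φ)) := by
    intro t
    have hcs : Real.sin (ω * t) ^ 2 + Real.cos (ω * t) ^ 2 = 1 := Real.sin_sq_add_cos_sq _
    apply mul_left_cancel₀ (pow_ne_zero 2 hω0.ne' : ω ^ 2 ≠ 0)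
    have hsplit : ω ^ 2 * ((x t - z t - k * ε) ^ 2 + (y t - k * z t - k ^ 2 * ε + ε) ^ 2)
        = (ω * (x t - z t - k * ε - k / 2 * (y t - k * z t - k ^ 2 * ε + ε))
            + k / 2 * (ω * (y t - k * z t - k ^ 2 * ε + ε))) ^ 2
          + (ω * (y t - k * z t - k ^ 2 * ε + ε)) ^ 2 := by ring
    rw [hD t, hsplit, h1 t, h2 t,
      show Real.sqrt (4 - k ^ 2) * t = 2 * (ω * t) by rw [hωdef]; ring,
      Real.cos_add, Real.cos_two_mul, Real.sin_two_mul,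
      show k * t = k / 2 * t + k / 2 * t by ring, Real.exp_add]
    linear_combination
      (Real.exp (k / 2 * t) ^ 2 * (A * Real.cos (ω * t) - B * Real.sin (ω * t)) ^ 2) * hμω
      + (Real.exp (k / 2 * t) ^ 2 * ((A ^ 2 + B ^ 2) - 2 * (k / 2) * ω * A * B
          - (k / 2) ^ 2 * B ^ 2 + (k / 2) ^ 2 * A ^ 2)) * hcs
      + ((2 * Real.cos (ω * t) ^ 2 - 1) * Real.exp (k / 2 * t) ^ 2) * hφ1
      + (2 * Real.sin (ω * t) * Real.cos (ω * t) * Real.exp (k / 2 * t) ^ 2) * hφ2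
      - (Real.exp (k / 2 * t) ^ 2 * (1 + k / 2 * ((2 * Real.cos (ω * t) ^ 2 - 1) * Real.cos φ
          - 2 * Real.sin (ω * t) * Real.cos (ω * t) * Real.sin φ))) * hϑ2
  -- the bounds
  have bdd : ∀ t : ℝ, (1 - k / 2) * ϑ ^ 2 * Real.exp (k * t) ≤ D t ∧
      D t ≤ (1 + k / 2) * ϑ ^ 2 * Real.exp (k * t) := by
    intro t
    have hc1 := Real.neg_one_le_cos (Real.sqrt (4 - k ^ 2) * t + φ)
    have hc2 := Real.cos_le_one (Real.sqrt (4 - k ^ 2) * t + φ)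
    have h0 : (0:ℝ) ≤ ϑ ^ 2 * Real.exp (k * t) := by positivity
    rw [key t]
    constructor
    · nlinarith [mul_nonneg h0 (mul_nonneg (by linarith : (0:ℝ) ≤ k / 2)
        (by linarith : (0:ℝ) ≤ 1 + Real.cos (Real.sqrt (4 - k ^ 2) * t + φ))), h0]
    · nlinarith [mul_nonneg h0 (mul_nonneg (by linarith : (0:ℝ) ≤ k / 2)
        (by linarith : (0:ℝ) ≤ 1 - Real.cos (Real.sqrt (4 - k ^ 2) * t + φ))), h0]
  refine ⟨ϑ, φ, hϑ0, key, bdd, ?_⟩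
  intro hD0
  have e0 : Real.exp (k * 0) = 1 := by rw [mul_zero, Real.exp_zero]
  have hl0 := (bdd 0).1
  have hu0 := (bdd 0).2
  rw [e0, mul_one] at hl0 hu0
  have hϑpos : 0 < ϑ := by
    rcases hϑ0.eq_or_lt with h | h
    · exfalso
      rw [← h] at hu0
      norm_num at hu0
      linarith
    · exact h
  refine ⟨hϑpos, fun t => ⟨?_, ?_⟩⟩
  · have hlt := (bdd t).1
    rw [div_mul_eq_mul_div, div_mul_eq_mul_div, div_le_iff₀ (by linarith : (0:ℝ) < 1 + k / 2)]
    nlinarith [mul_le_mul_of_nonneg_left hu0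
        (mul_nonneg (by linarith : (0:ℝ) ≤ 1 - k / 2) (Real.exp_pos (k * t)).le),
      mul_le_mul_of_nonneg_left hlt (by linarith : (0:ℝ) ≤ 1 + k / 2)]
  · have hut := (bdd t).2
    rw [div_mul_eq_mul_div, div_mul_eq_mul_div, le_div_iff₀ (by linarith : (0:ℝ) < 1 - k / 2)]
    nlinarith [mul_le_mul_of_nonneg_left hl0
        (mul_nonneg (by linarith : (0:ℝ) ≤ 1 + k / 2) (Real.exp_pos (k * t)).le),
      mul_le_mul_of_nonneg_right hut (by linarith : (0:ℝ) ≤ 1 - k / 2)]
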